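/- Let k be a field of characteristic 2, V = Z/2 × Z/2 the Klein four group, and identify kV ≅ k[x,y]/(x²,y²). Let M be the kV-module with basis {u_i, v_i : i ≥ 0} and action x·u_i = v_i, y·u_i = v_{i−1} (with v_{−1} = 0), x·v_i = 0 = y·v_i. For any a, b ∈ k not both zero with (a,b) ≠ (0,b'), the kernel of multiplication by ax + by on M equals the image of multiplication by ax + by on M, namely the span of {v_i : i ≥ 0}; while the kernel of multiplication by y on M is the span of {v_i : i ≥ 0} ∪ {u_0}, strictly larger than the image of y. -/

import Mathlib

/-- The underlying space of the Klein-four module `M` with basis `{uᵢ, vᵢ : i ≥ 0}`: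
the first component records the coefficients of the `uᵢ`, the second those of the `vᵢ`. -/
abbrev KleinM (k : Type*) [Field k] := ((ℕ →₀ k) × (ℕ →₀ k))

/-- Multiplication by `x`: `x·uᵢ = vᵢ`, `x·vᵢ = 0`. -/
noncomputable def opX (k : Type*) [Field k] : KleinM k →ₗ[k] KleinM k :=
  (LinearMap.inr k (ℕ →₀ k) (ℕ →₀ k)).comp (LinearMap.fst k (ℕ →₀ k) (ℕ →₀ k))

/-- Multiplication by `y`: `y·uᵢ = vᵢ₋₁` (with `v₋₁ = 0`), `y·vᵢ = 0`. -/
noncomputable def opY (k : Type*) [Field k] : KleinM k →ₗ[k] KleinM k :=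
  ((LinearMap.inr k (ℕ →₀ k) (ℕ →₀ k)).comp
    (Finsupp.lcomapDomain (fun n => n + 1) (add_left_injective 1))).comp
    (LinearMap.fst k (ℕ →₀ k) (ℕ →₀ k))

lemma ker_aux {k : Type*} [Field k] (a b : k) (ha : a ≠ 0) (p : ℕ →₀ k)
    (h : ∀ n, a * p n + b * p (n+1) = 0) : p = 0 := by
  set N := (p.support.sup id) + 1 with hN
  have hbig : ∀ m, N ≤ m → p m = 0 := by
    intro m hm
    by_contra hpm
    have : m ∈ p.support := Finsupp.mem_support_iff.mpr hpm
    have : m ≤ p.support.sup id := Finset.le_sup (f := id) this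
    omega
  have key : ∀ d m, N ≤ m + d → p m = 0 := by
    intro d
    induction d with
    | zero => intro m hm; exact hbig m (by omega)
    | succ d ih =>
      intro m hm
      by_cases hc : N ≤ m + d
      · exact ih m hc
      · have h1 : p (m+1) = 0 := ih (m+1) (by omega)
        have := h m
        rw [h1, mul_zero, add_zero] at this
        rcases mul_eq_zero.mp this with h'|h'
        · exact absurd h' ha
        · exact h'
  ext m
  exact key N m (by omega)

noncomputable def pre {k : Type*} [Field k] (a b : k) (n : ℕ) (c : k) : ℕ →₀ k :=
  Finsupp.onFinset (Finset.range (n+1)) (fun m => if m ≤ n then (c/a)*(b/a)^(n-m) else 0)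
    (by intro m hm
        by_cases h : m ≤ n
        · exact Finset.mem_range.mpr (by omega)
        · simp [h] at hm)

lemma pre_spec {k : Type*} [Field k] [CharP k 2] (a b : k) (ha : a ≠ 0) (n : ℕ) (c : k)
    (m : ℕ) : a * pre a b n c m + b * pre a b n c (m+1) = Finsupp.single n c m := by
  simp only [pre, Finsupp.onFinset_apply, Finsupp.single_apply]
  rcases lt_trichotomy m n with h|h|h
  · rw [if_pos (by omega), if_pos (by omega), if_neg (by omega)]
    have hnm : n - m = (n - (m+1)) + 1 := by omega
    rw [hnm, pow_succ]
    have : a * (c / a * ((b / a) ^ (n - (m + 1)) * (b / a))) =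
        b * (c / a * (b / a) ^ (n - (m + 1))) := by
      field_simp
    rw [this]
    exact CharTwo.add_self_eq_zero _
  · subst h
    rw [if_pos le_rfl, if_neg (by omega), if_pos rfl]
    simp [ha]
    field_simp
  · rw [if_neg (by omega), if_neg (by omega), if_neg (by omega)]
    ring

lemma Lapp {k : Type*} [Field k] (a b : k) (p q : ℕ →₀ k) :
    ((a • opX k + b • opY k) (p, q)).1 = 0 ∧
    ∀ n, ((a • opX k + b • opY k) (p, q)).2 n = a * p n + b * p (n+1) := by
  constructor
  · simp [opX, opY, Finsupp.lcomapDomain]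
  · intro n; simp [opX, opY, Finsupp.lcomapDomain]


/-- For the Klein four group over a field `k` of characteristic 2, on the module `M` with
basis `{uᵢ, vᵢ}` and `x·uᵢ = vᵢ`, `y·uᵢ = vᵢ₋₁`, `x·vᵢ = y·vᵢ = 0`:  for `a ≠ 0`, both the
kernel and the image of multiplication by `ax + by` equal the span of the `vᵢ`; while the
kernel of multiplication by `y` is the span of `{vᵢ} ∪ {u₀}`, strictly larger than the image
of `y`. -/
theorem stmt10 (k : Type*) [Field k] [CharP k 2] :
    (∀ a b : k, a ≠ 0 →
      LinearMap.ker (a • opX k + b • opY k) =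
          Submodule.prod (⊥ : Submodule k (ℕ →₀ k)) (⊤ : Submodule k (ℕ →₀ k)) ∧
      LinearMap.range (a • opX k + b • opY k) =
          Submodule.prod (⊥ : Submodule k (ℕ →₀ k)) (⊤ : Submodule k (ℕ →₀ k))) ∧
    LinearMap.ker (opY k) =
      Submodule.prod (Submodule.span k {Finsupp.single 0 (1 : k)})
        (⊤ : Submodule k (ℕ →₀ k)) ∧
    LinearMap.range (opY k) < LinearMap.ker (opY k) := by
  refine ⟨fun a b ha => ⟨?_, ?_⟩, ?_, ?_⟩
  · -- kernel
    ext ⟨p, q⟩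
    simp only [LinearMap.mem_ker, Submodule.mem_prod, Submodule.mem_bot, Submodule.mem_top,
      and_true]
    constructor
    · intro h
      refine ker_aux a b ha p (fun n => ?_)
      rw [← (Lapp a b p q).2 n, h]
      rfl
    · rintro rfl
      simp [opX, opY]
  · -- range
    apply le_antisymm
    · rintro m ⟨⟨x1, x2⟩, rfl⟩
      exact ⟨(Lapp a b x1 x2).1, trivial⟩
    · rintro ⟨p, q⟩ ⟨hp, -⟩
      simp only [SetLike.mem_coe, Submodule.mem_bot] at hp
      subst hp
      induction q using Finsupp.induction with
      | zero => rw [Prod.mk_zero_zero]; exact Submodule.zero_mem _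
      | single_add n c f hnf hc ih =>
        have h1 : ((0, Finsupp.single n c) : KleinM k) ∈
            LinearMap.range (a • opX k + b • opY k) := by
          refine ⟨(pre a b n c, 0), ?_⟩
          refine Prod.ext (Lapp a b _ _).1 ?_
          ext m
          rw [(Lapp a b _ _).2 m]
          exact pre_spec a b ha n c m
        have : ((0, Finsupp.single n c + f) : KleinM k) =
            (0, Finsupp.single n c) + (0, f) := by simp
        rw [this]
        exact add_mem h1 ih
  · -- ker opY
    ext ⟨p, q⟩
    simp only [LinearMap.mem_ker, Submodule.mem_prod, Submodule.mem_top, and_true,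
      Submodule.mem_span_singleton]
    constructor
    · intro h
      have hm : ∀ n, p (n+1) = 0 := by
        intro n
        have := congrArg (fun z : KleinM k => z.2 n) h
        simpa [opY, Finsupp.lcomapDomain] using this
      refine ⟨p 0, ?_⟩
      ext m
      cases m with
      | zero => simp
      | succ m => simp [hm m, Finsupp.single_apply]
    · rintro ⟨c, rfl⟩
      simp [opY, Finsupp.lcomapDomain, Prod.ext_iff, Finsupp.ext_iff,
        Finsupp.single_apply]
  · -- strict
    refine lt_of_le_of_ne ?_ ?_
    · rintro m ⟨x, rfl⟩
      simp [LinearMap.mem_ker, opY, Finsupp.lcomapDomain, Prod.ext_iff, Finsupp.ext_iff]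
    · intro he
      have hmem : ((Finsupp.single 0 (1 : k), 0) : KleinM k) ∈
          LinearMap.range (opY k) := by
        rw [he]
        simp [LinearMap.mem_ker, opY, Finsupp.lcomapDomain, Prod.ext_iff,
          Finsupp.ext_iff, Finsupp.single_apply]
      obtain ⟨x, hx⟩ := hmem
      have h0 : Finsupp.single 0 (1 : k) = (0 : ℕ →₀ k) := by
        have := congrArg Prod.fst hx
        simp [opY] at this
        exact this.symm
      simpa using congrArg (fun f => f 0) h0
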